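/- (Cover inequality) Let G be a finite bipartite graph and C ⊆ V(G) a vertex cover (every edge has at least one endpoint in C). Then Σ_{v ∈ C} E_G(v) ≥ (1/2) E(G). -/

import Mathlib

open Matrix BigOperators Finset Polynomial

noncomputable def adjMat {V : Type*} [Fintype V] (G : SimpleGraph V) : Matrix V V ℝ :=
  letI := Classical.decRel G.Adj; G.adjMatrix ℝ

noncomputable def absMat {V : Type*} [Fintype V] [DecidableEq V] (A : Matrix V V ℝ) :
    Matrix V V ℝ :=
  let hA := (Matrix.posSemidef_self_mul_conjTranspose A).1
  (hA.eigenvectorUnitary : Matrix V V ℝ) *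
    Matrix.diagonal ((↑) ∘ Real.sqrt ∘ hA.eigenvalues) *
    (star hA.eigenvectorUnitary : Matrix V V ℝ)

/-- The energy of a vertex: the (i,i) entry of |A| = (A Aᴴ)^{1/2}. -/
noncomputable def vertexEnergy {V : Type*} [Fintype V] [DecidableEq V]
    (G : SimpleGraph V) (i : V) : ℝ :=
  absMat (adjMat G) i i

/-- The energy of a graph: the trace of |A| (equivalently the sum of vertex energies). -/
noncomputable def graphEnergy {V : Type*} [Fintype V] [DecidableEq V]
    (G : SimpleGraph V) : ℝ :=
  Matrix.trace (absMat (adjMat G))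

lemma sign_mul_self_eq_abs (x : ℝ) : Real.sign x * x = |x| := by
  rcases lt_trichotomy x 0 with h | h | h
  · rw [Real.sign_of_neg h, abs_of_neg h]; ring
  · subst h; simp
  · rw [Real.sign_of_pos h, abs_of_pos h]; ring

lemma abs_sign_le_one (x : ℝ) : |Real.sign x| ≤ 1 := by
  rcases lt_trichotomy x 0 with h | h | h
  · rw [Real.sign_of_neg h]; norm_num
  · subst h; simp
  · rw [Real.sign_of_pos h]; norm_num

/-- cover inequality: for a bipartite graph G and a vertex cover C,
Σ_{v ∈ C} E_G(v) ≥ (1/2)·E(G). -/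
theorem cover_energy_inequality {V : Type*} [Fintype V] [DecidableEq V]
    (G : SimpleGraph V) (hG : G.Colorable 2) (C : Finset V)
    (hC : ∀ a b : V, G.Adj a b → a ∈ C ∨ b ∈ C) :
    (1 / 2) * graphEnergy G ≤ ∑ v ∈ C, vertexEnergy G v := by
  classical
  simp only [graphEnergy, vertexEnergy]
  set A : Matrix V V ℝ := adjMat G with hAdef
  -- A is real symmetric (Hermitian)
  have hsymm : Aᵀ = A := by
    rw [hAdef]
    exact SimpleGraph.isSymm_adjMatrix G
  have hsym : A.IsHermitian := by
    show Aᴴ = A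
    rw [Matrix.conjTranspose_eq_transpose_of_trivial]
    exact hsymm
  have hA0 : ∀ u v : V, ¬ G.Adj u v → A u v = 0 := by
    intro u v h
    rw [hAdef]
    unfold adjMat
    simp [h]
  set μ : V → ℝ := hsym.eigenvalues with hμdef
  set Q : Matrix V V ℝ := (hsym.eigenvectorUnitary : Matrix V V ℝ) with hQdef
  have hQ1 : Qᴴ * Q = 1 := by
    have := Matrix.mem_unitaryGroup_iff'.mp hsym.eigenvectorUnitary.2
    rwa [Matrix.star_eq_conjTranspose] at this
  have hQ2 : Q * Qᴴ = 1 := by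
    have := Matrix.mem_unitaryGroup_iff.mp hsym.eigenvectorUnitary.2
    rwa [Matrix.star_eq_conjTranspose] at this
  have spec : A = Q * Matrix.diagonal μ * Qᴴ := by
    have h := hsym.spectral_theorem
    rw [RCLike.ofReal_real_eq_id] at h
    simpa [Matrix.star_eq_conjTranspose] using h
  -- general multiplication lemma
  have key : ∀ d e : V → ℝ, (Q * Matrix.diagonal d * Qᴴ) * (Q * Matrix.diagonal e * Qᴴ)
      = Q * Matrix.diagonal (fun k => d k * e k) * Qᴴ := by
    intro d e
    calc (Q * Matrix.diagonal d * Qᴴ) * (Q * Matrix.diagonal e * Qᴴ)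
        = Q * Matrix.diagonal d * (Qᴴ * Q) * (Matrix.diagonal e * Qᴴ) := by
          simp only [Matrix.mul_assoc]
      _ = Q * Matrix.diagonal d * (Matrix.diagonal e * Qᴴ) := by
          rw [hQ1, Matrix.mul_one]
      _ = Q * (Matrix.diagonal d * Matrix.diagonal e) * Qᴴ := by
          simp only [Matrix.mul_assoc]
      _ = Q * Matrix.diagonal (fun k => d k * e k) * Qᴴ := by
          rw [Matrix.diagonal_mul_diagonal]
  set s : V → ℝ := fun k => Real.sign (μ k) with hsdef
  set N : Matrix V V ℝ := Q * Matrix.diagonal (fun k => |μ k|) * Qᴴ with hNdef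
  set U : Matrix V V ℝ := Q * Matrix.diagonal s * Qᴴ with hUdef
  have hN_ps : N.PosSemidef := by
    rw [hNdef]
    exact (Matrix.posSemidef_diagonal_iff.mpr fun k => abs_nonneg _).mul_mul_conjTranspose_same Q
  have hNsq : N ^ 2 = A * Aᴴ := by
    rw [pow_two, hNdef, key, hsym.eq]
    conv_rhs => rw [spec]
    rw [key, show (fun k => |μ k| * |μ k|) = fun k => μ k * μ k from
      funext fun k => abs_mul_abs_self (μ k)]
  have hB : absMat A = N := by
    have hAA : A * Aᴴ = A ^ 2 := by rw [hsym.eq, pow_two]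
    have h1 : absMat A = cfc Real.sqrt (A * Aᴴ) := by
      rw [(Matrix.posSemidef_self_mul_conjTranspose A).1.cfc_eq]
      unfold absMat IsHermitian.cfc
      simp [Unitary.conjStarAlgAut_apply]
      rfl
    have h2 : cfc Real.sqrt (A ^ 2) = cfc (fun x : ℝ => |x|) A := by
      rw [← cfc_comp_pow Real.sqrt 2 A Real.continuous_sqrt.continuousOn hsym.isSelfAdjoint]
      congr 1
      funext x
      exact Real.sqrt_sq_eq_abs x
    have h3 : cfc (fun x : ℝ => |x|) A = N := by
      rw [hsym.cfc_eq]
      unfold IsHermitian.cfc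
      simp [Unitary.conjStarAlgAut_apply, hNdef, hQdef, hμdef, Function.comp_def]
      rw [Matrix.star_eq_conjTranspose, Matrix.conjTranspose_eq_transpose_of_trivial]
    rw [h1, hAA, h2, h3]
  have hUA : U * A = N := by
    rw [hUdef]
    conv_lhs => rw [spec]
    rw [key, hNdef, show (fun k => s k * μ k) = fun k => |μ k| from
      funext fun k => sign_mul_self_eq_abs (μ k)]
  have hAU : A * U = N := by
    rw [hUdef]
    conv_lhs => rw [spec]
    rw [key, hNdef, show (fun k => μ k * s k) = fun k => |μ k| from
      funext fun k => by rw [mul_comm]; exact sign_mul_self_eq_abs (μ k)]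
  -- diagonal sign matrices for the cover
  set d : V → ℝ := fun v => if v ∈ C then 1 else -1 with hddef
  set p : V → ℝ := fun v => if v ∈ C then 0 else 1 with hpdef
  set D : Matrix V V ℝ := Matrix.diagonal d with hDdef
  set P : Matrix V V ℝ := Matrix.diagonal p with hPdef
  have hDD : D * D = 1 := by
    rw [hDdef, Matrix.diagonal_mul_diagonal]
    have h : (fun i => d i * d i) = fun _ => (1 : ℝ) := by
      funext v
      simp only [hddef]
      by_cases hv : v ∈ C <;> simp [hv]
    rw [h, Matrix.diagonal_one]
  have hDAD : D * A * D = A - (2 : ℝ) • (P * A + A * P) := by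
    ext u v
    rw [hDdef, hPdef, Matrix.sub_apply, Matrix.smul_apply, Matrix.add_apply, smul_eq_mul,
      Matrix.mul_diagonal, Matrix.diagonal_mul, Matrix.diagonal_mul, Matrix.mul_diagonal]
    simp only [hddef, hpdef]
    by_cases hu : u ∈ C <;> by_cases hv : v ∈ C <;> simp only [hu, hv, if_true, if_false]
    · ring
    · ring
    · ring
    · have hz : A u v = 0 := by
        apply hA0
        intro hadj
        rcases hC u v hadj with h | h
        · exact hu h
        · exact hv h
      rw [hz]; ring
  -- the key matrix R
  set R : Matrix V V ℝ := Qᴴ * D * Q with hRdef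
  have hDH : Dᴴ = D := by
    simp [hDdef, Matrix.diagonal_conjTranspose]
  have hRH : Rᴴ = R := by
    rw [hRdef, Matrix.conjTranspose_mul, Matrix.conjTranspose_mul, hDH,
      Matrix.conjTranspose_conjTranspose, Matrix.mul_assoc]
  have hRsym : ∀ k l : V, R l k = R k l := by
    intro k l
    have := congrFun (congrFun hRH k) l
    rw [Matrix.conjTranspose_apply, star_trivial] at this
    exact this
  have hRR : R * R = 1 := by
    calc R * R = Qᴴ * D * (Q * Qᴴ) * (D * Q) := by
          rw [hRdef]; simp only [Matrix.mul_assoc]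
      _ = Qᴴ * (D * D) * Q := by
          rw [hQ2, Matrix.mul_one]; simp only [Matrix.mul_assoc]
      _ = 1 := by rw [hDD, Matrix.mul_one, hQ1]
  have hrow : ∀ k, ∑ l, (R k l) ^ 2 = 1 := by
    intro k
    have h := congrFun (congrFun hRR k) k
    rw [Matrix.mul_apply] at h
    have h1 : (1 : Matrix V V ℝ) k k = 1 := Matrix.one_apply_eq k
    rw [h1] at h
    calc ∑ l, (R k l) ^ 2 = ∑ l, R k l * R l k := by
          refine Finset.sum_congr rfl fun l _ => ?_
          rw [sq, hRsym k l]
      _ = 1 := h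
  -- trace identities
  have e1 : Matrix.trace (U * (P * A)) = Matrix.trace (P * N) := by
    rw [Matrix.trace_mul_comm, Matrix.mul_assoc, hAU]
  have e2 : Matrix.trace (U * (A * P)) = Matrix.trace (P * N) := by
    rw [← Matrix.mul_assoc, hUA, Matrix.trace_mul_comm]
  have c1 : Matrix.trace (D * U * D * A) = Matrix.trace (U * (D * A * D)) := by
    rw [show D * U * D * A = D * (U * D * A) by simp only [Matrix.mul_assoc],
      Matrix.trace_mul_comm,
      show U * D * A * D = U * (D * A * D) by simp only [Matrix.mul_assoc]]
  have hUtr : Matrix.trace (U * A) = Matrix.trace N := by rw [hUA]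
  have main : Matrix.trace (D * U * D * A)
      = Matrix.trace N - 4 * Matrix.trace (P * N) := by
    rw [c1, hDAD, Matrix.mul_sub, Matrix.mul_smul, Matrix.mul_add, Matrix.trace_sub,
      Matrix.trace_smul, Matrix.trace_add, e1, e2, hUtr, smul_eq_mul]
    ring
  -- trace of N
  have htrN : Matrix.trace N = ∑ k, |μ k| := by
    rw [hNdef, Matrix.trace_mul_cycle, hQ1, Matrix.one_mul, Matrix.trace_diagonal]
  -- expressing the trace of D U D A via R
  have key2 : Qᴴ * (D * U * D * A) * Q = R * Matrix.diagonal s * (R * Matrix.diagonal μ) := by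
    rw [hUdef]
    conv_lhs => rw [spec]
    rw [hRdef]
    simp only [Matrix.mul_assoc, hQ1, Matrix.mul_one]
  have e4 : Matrix.trace (D * U * D * A)
      = Matrix.trace (R * Matrix.diagonal s * (R * Matrix.diagonal μ)) := by
    have h := congrArg Matrix.trace key2
    rwa [Matrix.trace_mul_cycle, ← Matrix.mul_assoc, hQ2, Matrix.one_mul] at h
  have e5 : Matrix.trace (R * Matrix.diagonal s * (R * Matrix.diagonal μ))
      = ∑ k, ∑ l, (R k l * s l) * (R l k * μ k) := by
    rw [Matrix.trace]
    refine Finset.sum_congr rfl fun k _ => ?_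
    rw [Matrix.diag_apply, Matrix.mul_apply]
    refine Finset.sum_congr rfl fun l _ => ?_
    rw [Matrix.mul_diagonal, Matrix.mul_diagonal]
  -- the bound |trace (D U D A)| ≤ trace N
  have bound : |Matrix.trace (D * U * D * A)| ≤ Matrix.trace N := by
    rw [e4, e5, htrN]
    calc |∑ k, ∑ l, (R k l * s l) * (R l k * μ k)|
        ≤ ∑ k, |∑ l, (R k l * s l) * (R l k * μ k)| := Finset.abs_sum_le_sum_abs _ _
      _ ≤ ∑ k, ∑ l, |(R k l * s l) * (R l k * μ k)| := by
          refine Finset.sum_le_sum fun k _ => Finset.abs_sum_le_sum_abs _ _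
      _ ≤ ∑ k, ∑ l, (R k l) ^ 2 * |μ k| := by
          refine Finset.sum_le_sum fun k _ => Finset.sum_le_sum fun l _ => ?_
          rw [hRsym k l, abs_mul, abs_mul, abs_mul]
          have h1 : |s l| ≤ 1 := abs_sign_le_one _
          have h2 : (0:ℝ) ≤ |R k l| := abs_nonneg _
          have h3 : (0:ℝ) ≤ |μ k| := abs_nonneg _
          have h4 : (R k l) ^ 2 = |R k l| * |R k l| := by
            rw [← sq_abs]; ring
          rw [h4]
          calc |R k l| * |s l| * (|R k l| * |μ k|)
              = (|R k l| * |R k l| * |μ k|) * |s l| := by ring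
            _ ≤ (|R k l| * |R k l| * |μ k|) * 1 := by
                have hX : (0:ℝ) ≤ |R k l| * |R k l| * |μ k| := by positivity
                exact mul_le_mul_of_nonneg_left h1 hX
            _ = |R k l| * |R k l| * |μ k| := mul_one _
      _ = ∑ k, |μ k| := by
          refine Finset.sum_congr rfl fun k _ => ?_
          rw [← Finset.sum_mul, hrow k, one_mul]
  -- trace of P * N
  have htrPN : Matrix.trace (P * N) = ∑ v ∈ Cᶜ, N v v := by
    rw [Matrix.trace]
    calc ∑ v, (P * N).diag v = ∑ v, if v ∈ Cᶜ then N v v else 0 := by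
          refine Finset.sum_congr rfl fun v _ => ?_
          rw [Matrix.diag_apply, hPdef, Matrix.diagonal_mul]
          simp only [hpdef, Finset.mem_compl]
          by_cases h : v ∈ C <;> simp [h]
      _ = ∑ v ∈ Finset.univ ∩ Cᶜ, N v v := Finset.sum_ite_mem _ _ _
      _ = ∑ v ∈ Cᶜ, N v v := by rw [Finset.univ_inter]
  -- final assembly
  have hsplit : (∑ v ∈ C, N v v) + (∑ v ∈ Cᶜ, N v v) = Matrix.trace N :=
    Finset.sum_add_sum_compl C _
  have hbound2 : -(Matrix.trace N) ≤ Matrix.trace (D * U * D * A) := (abs_le.mp bound).1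
  rw [hB]
  linarith [main, hbound2, htrPN, hsplit]
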